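/- For the opposite multiplication x ⋆ᵒᵖ y := y ⋆ x on V, there exists an injective additive map φ : GF(8) → V with φ(1) = e₁ and φ(x·y) = φ(x) ⋆ᵒᵖ φ(y) for all x, y ∈ GF(8); i.e., the opposite semifield (V, +, ⋆ᵒᵖ) also contains a copy of F₈ and hence is also fractional. -/

import Mathlib

open Matrix

/-- The seven matrices `A₁,…,A₇` over `F₂ = ZMod 2` (indexed by `Fin 7`). -/
def A : Fin 7 → Matrix (Fin 7) (Fin 7) (ZMod 2)
  | 0 => 1
  | 1 => !![0,0,1,0,0,0,0; 1,0,1,0,0,0,0; 0,1,0,0,0,0,0; 0,0,0,1,1,1,1;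
            0,0,0,1,0,1,0; 0,0,0,0,0,1,1; 0,0,0,0,0,1,0]
  | 2 => !![0,1,0,0,0,0,0; 0,1,1,0,0,0,0; 1,0,1,0,0,0,0; 0,0,0,0,1,0,0;
            0,0,0,1,1,0,0; 0,0,0,1,1,1,1; 0,0,0,1,0,1,0]
  | 3 => !![0,0,0,1,1,0,0; 0,0,0,1,1,1,0; 0,0,0,0,1,0,1; 1,0,0,0,0,0,1;
            0,0,1,0,0,1,0; 0,1,1,1,0,1,1; 0,0,0,1,1,0,1]
  | 4 => !![0,0,0,0,1,0,0; 0,0,0,0,1,1,1; 0,0,0,1,0,1,0; 0,0,1,0,0,1,1;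
            1,0,1,0,0,0,1; 0,0,0,0,1,1,0; 0,1,1,1,0,1,1]
  | 5 => !![0,0,0,1,0,1,1; 0,0,0,1,1,0,0; 0,0,0,0,1,0,0; 0,0,0,1,0,1,0;
            0,1,1,1,1,1,1; 1,0,1,0,1,1,0; 0,0,1,1,0,1,1]
  | 6 => !![0,0,0,1,1,0,1; 0,0,0,0,1,0,0; 0,0,0,1,0,0,0; 0,1,1,0,1,0,1;
            0,1,1,1,0,1,0; 0,0,1,1,1,0,1; 1,0,0,0,1,1,0]

/-- The multiplication `x ⋆ y = (∑ i, xᵢ Aᵢ) ·ᵥ y` on `V = F₂⁷`. -/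
def star (x y : Fin 7 → ZMod 2) : Fin 7 → ZMod 2 := (∑ i, x i • A i) *ᵥ y

/-- The standard basis vectors of `V = F₂⁷`. -/
def e (i : Fin 7) : Fin 7 → ZMod 2 := Pi.single i 1

open Polynomial Module in
/-- `GF(8)` contains a root of `X³ + X + 1`. -/
lemma stmt13_exists_g : ∃ g : GaloisField 2 3, g ^ 3 = g + 1 := by
  have h2 : (2 : (ZMod 2)[X]) = 0 := by
    rw [show (2 : (ZMod 2)[X]) = 1 + 1 from by norm_num, ← Polynomial.C_1,
      ← Polynomial.C_add]
    simp [show (1+1 : ZMod 2) = 0 from rfl]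
  have hdvd : (X ^ 3 + X + 1 : (ZMod 2)[X]) ∣ X ^ (2 ^ 3) - X := by
    refine ⟨X ^ 5 + X ^ 3 + X ^ 2 + X, ?_⟩
    linear_combination (-(X + X^2 + X^3 + X^4 + X^5 + X^6) : (ZMod 2)[X]) * h2
  have hmonic : (X ^ (2 ^ 3) - X : (ZMod 2)[X]).Monic := by
    apply Polynomial.monic_X_pow_sub
    rw [Polynomial.degree_X]
    norm_num
  have hsplit : Splits ((X ^ (2 ^ 3) - X : (ZMod 2)[X]).map (algebraMap (ZMod 2) (GaloisField 2 3))) :=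
    SplittingField.splits _
  have hsp : Splits ((X ^ 3 + X + 1 : (ZMod 2)[X]).map (algebraMap (ZMod 2) (GaloisField 2 3))) :=
    hsplit.of_dvd (Polynomial.map_ne_zero hmonic.ne_zero) (Polynomial.map_dvd _ hdvd)
  have hdeg : (X ^ 3 + X + 1 : (ZMod 2)[X]).degree ≠ 0 := by
    have : (X ^ 3 + X + 1 : (ZMod 2)[X]).degree = 3 := by compute_degree!
    rw [this]; decide
  obtain ⟨g, hg⟩ := hsp.exists_eval_eq_zero (by rwa [Polynomial.degree_map])
  refine ⟨g, ?_⟩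
  simp only [eval_map, eval₂_add, eval₂_pow, eval₂_X, eval₂_one] at hg
  have h2' : (2 : GaloisField 2 3) = 0 := by
    have := CharP.cast_eq_zero (GaloisField 2 3) 2
    simpa using this
  linear_combination hg - (g + 1) * h2'

/-- `star` as a bilinear map. -/
noncomputable def starBil :
    (Fin 7 → ZMod 2) →ₗ[ZMod 2] (Fin 7 → ZMod 2) →ₗ[ZMod 2] (Fin 7 → ZMod 2) :=
  Matrix.toLin'.toLinearMap ∘ₗ
    (∑ i : Fin 7, (LinearMap.proj i : (Fin 7 → ZMod 2) →ₗ[ZMod 2] ZMod 2).smulRight (A i))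

lemma starBil_apply (x y : Fin 7 → ZMod 2) : starBil x y = star x y := by
  show Matrix.toLin'
      ((∑ i : Fin 7, (LinearMap.proj i : (Fin 7 → ZMod 2) →ₗ[ZMod 2] ZMod 2).smulRight (A i)) x) y
    = (∑ i, x i • A i) *ᵥ y
  rw [Matrix.toLin'_apply]
  congr 1

theorem stmt_13 :
    ∃ φ : GaloisField 2 3 → (Fin 7 → ZMod 2),
      Function.Injective φ ∧
      (∀ x y, φ (x + y) = φ x + φ y) ∧
      φ 1 = e 0 ∧
      (∀ x y, φ (x * y) = star (φ y) (φ x)) := by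
  obtain ⟨g, hg⟩ := stmt13_exists_g
  have h2' : (2 : GaloisField 2 3) = 0 := by
    have := CharP.cast_eq_zero (GaloisField 2 3) 2
    simpa using this
  have hg0 : g ≠ 0 := by
    rintro rfl
    simp at hg
  have hg1 : g ≠ 1 := by
    rintro rfl
    simp at hg
  -- linear independence of 1, g, g²
  have li : LinearIndependent (ZMod 2) ![(1 : GaloisField 2 3), g, g ^ 2] := by
    rw [Fintype.linearIndependent_iff]
    intro c hc
    have hcv : ∀ a : ZMod 2, a = 0 ∨ a = 1 := by decide
    rw [Fin.sum_univ_three] at hc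
    simp only [Matrix.cons_val_zero, Matrix.cons_val_one, Matrix.head_cons,
      Matrix.cons_val_two, Matrix.tail_cons] at hc
    have key : c 0 = 0 ∧ c 1 = 0 ∧ c 2 = 0 := by
      rcases hcv (c 0) with h0 | h0 <;> rcases hcv (c 1) with h1 | h1 <;>
        rcases hcv (c 2) with h2 | h2 <;>
        rw [h0, h1, h2] at hc <;>
        simp only [zero_smul, one_smul, add_zero, zero_add] at hc
      · exact ⟨h0, h1, h2⟩
      · -- g² = 0
        exact absurd ((pow_eq_zero_iff (by norm_num : (2:ℕ) ≠ 0)).mp hc) hg0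
      · -- g = 0
        exact absurd hc hg0
      · -- g + g² = 0 : g(1+g)=0 → g = 0 or g = -1 = 1
        exfalso
        have : g * (1 + g) = 0 := by linear_combination hc
        rcases mul_eq_zero.mp this with h | h
        · exact hg0 h
        · exact hg1 (by linear_combination h - h2')
      · -- 1 = 0
        exact absurd hc one_ne_zero
      · -- 1 + g² = 0 : (1+g)² = 0
        exfalso
        have : (1 + g) ^ 2 = 0 := by linear_combination hc + g * h2'
        have h1g : 1 + g = 0 := (pow_eq_zero_iff (by norm_num : (2:ℕ) ≠ 0)).mp this
        exact hg1 (by linear_combination h1g - h2')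
      · -- 1 + g = 0
        exfalso
        exact hg1 (by linear_combination hc - h2')
      · -- 1 + g + g² = 0 : multiply by (1+g): 1 + g³ = 0, so g³ = 1, so g + 1 = 1, g = 0
        exfalso
        have h3 : g ^ 3 = 1 := by
          linear_combination (1 + g) * hc + (-1 - g - g^2) * h2'
        have : g = 0 := by linear_combination -hg + h3
        exact hg0 this
    intro i
    fin_cases i
    · exact key.1
    · exact key.2.1
    · exact key.2.2
  have hcard : Fintype.card (Fin 3) = Module.finrank (ZMod 2) (GaloisField 2 3) := by
    rw [GaloisField.finrank 2 (by norm_num : 3 ≠ 0)]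
    simp
  let B := basisOfLinearIndependentOfCardEqFinrank li hcard
  have hB : ⇑B = ![(1 : GaloisField 2 3), g, g ^ 2] :=
    coe_basisOfLinearIndependentOfCardEqFinrank li hcard
  have hB0 : B 0 = 1 := by rw [hB]; rfl
  have hB1 : B 1 = g := by rw [hB]; rfl
  have hB2 : B 2 = g ^ 2 := by rw [hB]; rfl
  let ψ : GaloisField 2 3 →ₗ[ZMod 2] (Fin 7 → ZMod 2) := B.constr (ZMod 2) ![e 0, e 1, e 2]
  have hψ0 : ψ (B 0) = e 0 := by rw [Module.Basis.constr_basis]; rfl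
  have hψ1 : ψ (B 1) = e 1 := by rw [Module.Basis.constr_basis]; rfl
  have hψ2 : ψ (B 2) = e 2 := by rw [Module.Basis.constr_basis]; rfl
  have hψone : ψ 1 = e 0 := by rw [← hB0, hψ0]
  have hψg : ψ g = e 1 := by rw [← hB1, hψ1]
  have hψg2 : ψ (g ^ 2) = e 2 := by rw [← hB2, hψ2]
  -- multiplicativity as equality of bilinear maps
  have hkey : ∀ i j : Fin 3, ψ (B i * B j) = star (ψ (B j)) (ψ (B i)) := by
    intro i j
    fin_cases i <;> fin_cases j
    · show ψ (B 0 * B 0) = star (ψ (B 0)) (ψ (B 0))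
      rw [hB0, mul_one, hψone]; decide
    · show ψ (B 0 * B 1) = star (ψ (B 1)) (ψ (B 0))
      rw [hB0, hB1, one_mul, hψg, hψone]; decide
    · show ψ (B 0 * B 2) = star (ψ (B 2)) (ψ (B 0))
      rw [hB0, hB2, one_mul, hψg2, hψone]; decide
    · show ψ (B 1 * B 0) = star (ψ (B 0)) (ψ (B 1))
      rw [hB1, hB0, mul_one, hψg, hψone]; decide
    · show ψ (B 1 * B 1) = star (ψ (B 1)) (ψ (B 1))
      rw [hB1, show g * g = g ^ 2 from (sq g).symm, hψg, hψg2]; decide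
    · show ψ (B 1 * B 2) = star (ψ (B 2)) (ψ (B 1))
      rw [hB1, hB2, show g * g ^ 2 = g + 1 from by linear_combination hg,
        map_add, hψone, hψg, hψg2]; decide
    · show ψ (B 2 * B 0) = star (ψ (B 0)) (ψ (B 2))
      rw [hB2, hB0, mul_one, hψg2, hψone]; decide
    · show ψ (B 2 * B 1) = star (ψ (B 1)) (ψ (B 2))
      rw [hB2, hB1, show g ^ 2 * g = g + 1 from by linear_combination hg,
        map_add, hψone, hψg, hψg2]; decide
    · show ψ (B 2 * B 2) = star (ψ (B 2)) (ψ (B 2))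
      rw [hB2, show g ^ 2 * g ^ 2 = g ^ 2 + g from by linear_combination g * hg,
        map_add, hψg, hψg2]; decide
  have hbil : (LinearMap.mul (ZMod 2) (GaloisField 2 3)).compr₂ ψ
      = (starBil.flip).compl₁₂ ψ ψ := by
    apply B.ext; intro i
    apply B.ext; intro j
    simp only [LinearMap.compr₂_apply, LinearMap.mul_apply', LinearMap.compl₁₂_apply,
      LinearMap.flip_apply, starBil_apply]
    exact hkey i j
  have hmul : ∀ x y : GaloisField 2 3, ψ (x * y) = star (ψ y) (ψ x) := by
    intro x y
    have := LinearMap.congr_fun (LinearMap.congr_fun hbil x) y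
    simpa only [LinearMap.compr₂_apply, LinearMap.mul_apply', LinearMap.compl₁₂_apply,
      LinearMap.flip_apply, starBil_apply] using this
  have hinj : Function.Injective ψ := by
    rw [← LinearMap.ker_eq_bot, LinearMap.ker_eq_bot']
    intro x hx
    by_contra hne
    have h := hmul x⁻¹ x
    rw [inv_mul_cancel₀ hne, hψone, hx] at h
    have hz : star (0 : Fin 7 → ZMod 2) (ψ x⁻¹) = 0 := by
      show (∑ i, (0 : ZMod 2) • A i) *ᵥ (ψ x⁻¹) = 0
      simp
    rw [hz] at h
    exact absurd (congrFun h 0) (by decide)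
  exact ⟨ψ, hinj, fun x y => map_add ψ x y, hψone, hmul⟩
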